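/- arXiv:2201.09166 — 5 statements merged into one kernel-verified Lean document; each statement's English description precedes it below -/
import Mathlib

section
/- Let (Y, R_Y) and (Z, R_Z) be sets equipped with symmetric binary relations and let h : Y → Z be a relation-preserving map. Then h is overlap-monic with respect to ⋈_bin — that is, for all sets with symmetric binary relations (X₁, R_{X₁}), (X₂, R_{X₂}) and all relation-preserving maps f₁ : X₁ → Y, f₂ : X₂ → Y, if there exist no a₁ ∈ X₁, a₂ ∈ X₂ with R_Y(f₁(a₁), f₂(a₂)) then there exist no a₁, a₂ with R_Z(h(f₁(a₁)), h(f₂(a₂))) — if and only if h reflects the relations, i.e., R_Z(h(y₁), h(y₂)) implies R_Y(y₁, y₂) for all y₁, y₂ ∈ Y. -/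
universe u

/-- A map preserving binary relations. -/
def PreservesRel {X Y : Type u} (RX : X → X → Prop) (RY : Y → Y → Prop) (f : X → Y) : Prop :=
  ∀ a b, RX a b → RY (f a) (f b)

/-- The relation `⋈_bin` on a conterminous pair in `sBin`: no point of the image of `f₁`
is related by `R_Y` to a point of the image of `f₂`. -/
def BinDisjoint {X₁ X₂ Y : Type u} (RY : Y → Y → Prop) (f₁ : X₁ → Y) (f₂ : X₂ → Y) : Prop :=
  ¬ ∃ (a₁ : X₁) (a₂ : X₂), RY (f₁ a₁) (f₂ a₂)

/-- A relation-preserving map `h : (Y,R_Y) → (Z,R_Z)` between sets with symmetric binary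
relations is overlap-monic with respect to `⋈_bin` if and only if it reflects the
relations. -/
theorem binDisjoint_overlapMonic_iff_reflects {Y Z : Type u}
    (RY : Y → Y → Prop) (RZ : Z → Z → Prop) (hRY : Symmetric RY) (hRZ : Symmetric RZ)
    (h : Y → Z) (hpres : PreservesRel RY RZ h) :
    (∀ {X₁ X₂ : Type u} (RX₁ : X₁ → X₁ → Prop) (RX₂ : X₂ → X₂ → Prop),
        Symmetric RX₁ → Symmetric RX₂ →
        ∀ (f₁ : X₁ → Y) (f₂ : X₂ → Y), PreservesRel RX₁ RY f₁ → PreservesRel RX₂ RY f₂ →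
        BinDisjoint RY f₁ f₂ → BinDisjoint RZ (h ∘ f₁) (h ∘ f₂)) ↔
    (∀ y₁ y₂ : Y, RZ (h y₁) (h y₂) → RY y₁ y₂) := by
  constructor
  · intro H y₁ y₂ hz
    by_contra hy
    exact H (fun _ _ : PUnit => False) (fun _ _ : PUnit => False)
      (fun _ _ f => f.elim) (fun _ _ f => f.elim)
      (fun _ => y₁) (fun _ => y₂) (fun _ _ f => f.elim) (fun _ _ f => f.elim)
      (fun ⟨_, _, hr⟩ => hy hr) ⟨PUnit.unit, PUnit.unit, hz⟩
  · intro H X₁ X₂ RX₁ RX₂ _ _ f₁ f₂ _ _ hdisj ⟨a₁, a₂, hr⟩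
    exact hdisj ⟨a₁, a₂, H _ _ hr⟩
end

section
/- Let (C, ⋈_C) and (D, ⋈_D) be categories equipped with disjointness relations, and let F : C → D be a functor that preserves and reflects the ⋈-relations and is moreover full and essentially surjective on objects. Then F preserves overlap-monics: for any morphism h : c → d in C, if h is overlap-monic in (C, ⋈_C) then F(h) is overlap-monic in (D, ⋈_D). -/
open CategoryTheory

/-- A disjointness relation on a category `C`. -/
def IsDisjointnessRel {C : Type*} [Category C]
    (R : ∀ ⦃b₁ b₂ c : C⦄, (b₁ ⟶ c) → (b₂ ⟶ c) → Prop) : Prop :=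
  (∀ {b₁ b₂ c : C} (f₁ : b₁ ⟶ c) (f₂ : b₂ ⟶ c), R f₁ f₂ → R f₂ f₁) ∧
  (∀ {a₁ a₂ b₁ b₂ c : C} (f₁ : b₁ ⟶ c) (f₂ : b₂ ⟶ c) (g₁ : a₁ ⟶ b₁) (g₂ : a₂ ⟶ b₂),
      R f₁ f₂ → R (g₁ ≫ f₁) (g₂ ≫ f₂)) ∧
  (∀ {b₁ b₂ c d : C} (f₁ : b₁ ⟶ c) (f₂ : b₂ ⟶ c) (h : c ⟶ d), IsIso h →
      R f₁ f₂ → R (f₁ ≫ h) (f₂ ≫ h))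

/-- A morphism `h : c ⟶ d` is overlap-monic with respect to `R` if post-composition
with `h` preserves the relation `R` on conterminous pairs into `c`. -/
def OverlapMonic {C : Type*} [Category C]
    (R : ∀ ⦃b₁ b₂ c : C⦄, (b₁ ⟶ c) → (b₂ ⟶ c) → Prop) {c d : C} (h : c ⟶ d) : Prop :=
  ∀ {b₁ b₂ : C} (f₁ : b₁ ⟶ c) (f₂ : b₂ ⟶ c), R f₁ f₂ → R (f₁ ≫ h) (f₂ ≫ h)

/-- A functor preserving and reflecting disjointness relations which is full and
essentially surjective on objects preserves overlap-monics. -/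
theorem functor_preserves_overlapMonic {C D : Type*} [Category C] [Category D]
    (RC : ∀ ⦃b₁ b₂ c : C⦄, (b₁ ⟶ c) → (b₂ ⟶ c) → Prop)
    (RD : ∀ ⦃b₁ b₂ c : D⦄, (b₁ ⟶ c) → (b₂ ⟶ c) → Prop)
    (hRC : IsDisjointnessRel RC) (hRD : IsDisjointnessRel RD)
    (F : C ⥤ D)
    (hpres : ∀ {b₁ b₂ c : C} (f₁ : b₁ ⟶ c) (f₂ : b₂ ⟶ c),
        RC f₁ f₂ → RD (F.map f₁) (F.map f₂))
    (hrefl : ∀ {b₁ b₂ c : C} (f₁ : b₁ ⟶ c) (f₂ : b₂ ⟶ c),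
        RD (F.map f₁) (F.map f₂) → RC f₁ f₂)
    (hfull : F.Full) (hes : F.EssSurj)
    {c d : C} (h : c ⟶ d) (hmono : OverlapMonic RC h) :
    OverlapMonic RD (F.map h) := by
  intro b₁ b₂ f₁ f₂ hf
  obtain ⟨_, hpre, _⟩ := hRD
  set a₁ := F.objPreimage b₁ with ha₁
  set a₂ := F.objPreimage b₂ with ha₂
  let ε₁ : F.obj a₁ ≅ b₁ := F.objObjPreimageIso b₁
  let ε₂ : F.obj a₂ ≅ b₂ := F.objObjPreimageIso b₂
  obtain ⟨g₁, hg₁⟩ := F.map_surjective (ε₁.hom ≫ f₁)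
  obtain ⟨g₂, hg₂⟩ := F.map_surjective (ε₂.hom ≫ f₂)
  have h1 : RD (F.map g₁) (F.map g₂) := by
    rw [hg₁, hg₂]; exact hpre f₁ f₂ ε₁.hom ε₂.hom hf
  have h2 : RC (g₁ ≫ h) (g₂ ≫ h) := hmono g₁ g₂ (hrefl g₁ g₂ h1)
  have h3 := hpre _ _ ε₁.inv ε₂.inv (hpres _ _ h2)
  simpa [hg₁, hg₂] using h3
end

section
/- On the category of topological spaces and continuous maps, define f₁ ⋈_P f₂ for a conterminous pair of continuous maps f₁ : X₁ → Y, f₂ : X₂ → Y if and only if no points a₁ ∈ X₁ and a₂ ∈ X₂ have f₁(a₁) and f₂(a₂) joined by a continuous path in Y. Then a continuous map f : X → Y is overlap-monic with respect to ⋈_P — that is, for all topological spaces W₁, W₂ and all continuous maps g₁ : W₁ → X, g₂ : W₂ → X, g₁ ⋈_P g₂ implies (f ∘ g₁) ⋈_P (f ∘ g₂) — if and only if for all x, x' ∈ X, whenever f(x) and f(x') are joined by a path in Y, the points x and x' are joined by a path in X (equivalently, if and only if the induced map π₀(f) : π₀(X) → π₀(Y) on path components is injective). -/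
universe u

/-- Path-disjointness of a conterminous pair of continuous maps: no point of the image
of `f₁` is joined by a continuous path in the codomain to a point of the image of `f₂`. -/
def PathDisjoint {X₁ X₂ Y : Type u} [TopologicalSpace X₁] [TopologicalSpace X₂]
    [TopologicalSpace Y] (f₁ : C(X₁, Y)) (f₂ : C(X₂, Y)) : Prop :=
  ¬ ∃ (a₁ : X₁) (a₂ : X₂), Joined (f₁ a₁) (f₂ a₂)

/-- A continuous map is overlap-monic with respect to the path-disjointness relation
if and only if it reflects joinedness of points (equivalently, the induced map on path
components is injective). -/
theorem pathDisjoint_overlapMonic_iff {X Y : Type u} [TopologicalSpace X]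
    [TopologicalSpace Y] (f : C(X, Y)) :
    (∀ {W₁ W₂ : Type u} [TopologicalSpace W₁] [TopologicalSpace W₂]
        (g₁ : C(W₁, X)) (g₂ : C(W₂, X)),
        PathDisjoint g₁ g₂ → PathDisjoint (f.comp g₁) (f.comp g₂)) ↔
    (∀ x x' : X, Joined (f x) (f x') → Joined x x') := by
  constructor
  · intro h x x' hj
    by_contra hnj
    exact h (ContinuousMap.const PUnit x) (ContinuousMap.const PUnit x')
      (fun ⟨_, _, hjoined⟩ => hnj hjoined) ⟨PUnit.unit, PUnit.unit, hj⟩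
  · intro h W₁ W₂ _ _ g₁ g₂ hd ⟨a₁, a₂, hj⟩
    exact hd ⟨a₁, a₂, h _ _ hj⟩
end

section
/- Let X be a smooth manifold (finite-dimensional, Hausdorff, second countable, without boundary) and let V be a smooth nowhere-vanishing vector field on X. Then there exists a smooth function f : X → ℝ with f(p) > 0 for every p ∈ X such that the rescaled vector field fV is complete, i.e., through every point p ∈ X there is an integral curve γ : ℝ → X of fV defined on all of ℝ with γ(0) = p. -/
open scoped Manifold

open Function Set Metric
open scoped Topology NNReal

section Aux

theorem my_pl_sol {E : Type*} [NormedAddCommGroup E] [NormedSpace ℝ E] [CompleteSpace E]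
    {v : ℝ → E → E} {tMin tMax : ℝ} {t₀ : Icc tMin tMax} (x₀ : E) {a L K : ℝ≥0}
    (hpl : IsPicardLindelof v t₀ x₀ a 0 L K) :
    ∃ f : ℝ → E, f t₀ = x₀ ∧ (∀ t ∈ Icc tMin tMax, f t ∈ closedBall x₀ a) ∧
      ∀ t ∈ Icc tMin tMax, HasDerivWithinAt f (v t (f t)) (Icc tMin tMax) t := by
  obtain ⟨α, hα⟩ := ODE.FunSpace.exists_isFixedPt_next hpl (mem_closedBall_self le_rfl)
  refine ⟨α.compProj, by rw [ODE.FunSpace.compProj_val, ← hα, ODE.FunSpace.next_apply₀],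
    fun t _ => α.compProj_mem_closedBall hpl.mul_max_le, fun t ht => ?_⟩
  apply ODE.hasDerivWithinAt_picard_Icc t₀.2 hpl.continuousOn_uncurry
    α.continuous_compProj.continuousOn (fun _ ht' ↦ α.compProj_mem_closedBall hpl.mul_max_le)
    x₀ ht |>.congr_of_mem _ ht
  intro t' ht'
  nth_rw 1 [← hα]
  rw [ODE.FunSpace.compProj_of_mem ht', ODE.FunSpace.next_apply]

theorem my_transfer
    {E : Type*} [NormedAddCommGroup E] [NormedSpace ℝ E]
    {H : Type*} [TopologicalSpace H] {I : ModelWithCorners ℝ E H}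
    {M : Type*} [TopologicalSpace M] [ChartedSpace H M] [IsManifold I 1 M]
    {v : (x : M) → TangentSpace I x} (x₀ : M) {f : ℝ → E} {s : Set ℝ}
    (hf : ∀ t ∈ s, HasDerivAt f
        (tangentCoordChange I ((extChartAt I x₀).symm (f t)) x₀ ((extChartAt I x₀).symm (f t))
          (v ((extChartAt I x₀).symm (f t)))) t
      ∧ f t ∈ interior (extChartAt I x₀).target) :
    IsMIntegralCurveOn ((extChartAt I x₀).symm ∘ f) v s := by
  intros t ht
  apply HasMFDerivAt.hasMFDerivWithinAt
  set xₜ : M := (extChartAt I x₀).symm (f t) with hxₜ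
  have h : HasDerivAt f (tangentCoordChange I xₜ x₀ xₜ (v xₜ)) t := (hf t ht).1
  have hf3 : f t ∈ interior (extChartAt I x₀).target := (hf t ht).2
  have hf3' : f t ∈ (extChartAt I x₀).target := mem_of_mem_of_subset hf3 interior_subset
  have hft1 := mem_preimage.mp <|
    mem_of_mem_of_subset hf3' (extChartAt I x₀).target_subset_preimage_source
  have hft2 := mem_extChartAt_source (I := I) xₜ
  refine ⟨(continuousAt_extChartAt_symm'' hf3').comp h.continuousAt,
    HasDerivWithinAt.hasFDerivWithinAt (f := writtenInExtChartAt 𝓘(ℝ, ℝ) I t ((extChartAt I x₀).symm ∘ f)) (F := E) (f' := v xₜ) ?_⟩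
  simp only [mfld_simps, hasDerivWithinAt_univ]
  apply HasDerivAt.hasDerivWithinAt
  show HasDerivAt ((extChartAt I xₜ ∘ (extChartAt I x₀).symm) ∘ f) (v xₜ) t
  rw [← tangentCoordChange_self (I := I) (x := xₜ) (z := xₜ) (v := v xₜ) hft2]
  erw [← tangentCoordChange_comp (x := x₀) ⟨⟨hft2, hft1⟩, hft2⟩]
  apply HasFDerivAt.comp_hasDerivAt _ _ h
  apply HasFDerivWithinAt.hasFDerivAt (s := Set.range I) _ <|
    mem_nhds_iff.mpr ⟨interior (extChartAt I x₀).target,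
      subset_trans interior_subset (extChartAt_target_subset_range ..),
      isOpen_interior, hf3⟩
  rw [← (extChartAt I x₀).right_inv hf3']
  exact hasFDerivWithinAt_tangentCoordChange ⟨hft1, hft2⟩

theorem my_ule
    {E : Type*} [NormedAddCommGroup E] [NormedSpace ℝ E] [CompleteSpace E]
    {H : Type*} [TopologicalSpace H] {I : ModelWithCorners ℝ E H}
    {M : Type*} [TopologicalSpace M] [ChartedSpace H M] [IsManifold I 1 M]
    [BoundarylessManifold I M]
    {v : (x : M) → TangentSpace I x}
    (hv : ContMDiff I I.tangent 1 (fun x => (⟨x, v x⟩ : TangentBundle I M))) (x₀ : M) :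
    ∃ ε > (0:ℝ), ∃ U ∈ 𝓝 x₀, ∀ y ∈ U,
      ∃ γ : ℝ → M, γ 0 = y ∧ IsMIntegralCurveOn γ v (Ioo (-ε) ε) := by
  have hx : I.IsInteriorPoint x₀ := BoundarylessManifold.isInteriorPoint
  set e := extChartAt I x₀ with he
  set w : E → E := fun z => tangentCoordChange I (e.symm z) x₀ (e.symm z) (v (e.symm z)) with hw_def
  have hv' := hv x₀
  rw [contMDiffAt_iff] at hv'
  obtain ⟨_, hv'⟩ := hv'
  have hw : ContDiffAt ℝ 1 w (e x₀) :=
    (hv'.contDiffAt (range_mem_nhds_isInteriorPoint hx)).snd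
  obtain ⟨L, sL, hsL, hlip⟩ := hw.exists_lipschitzOnWith
  obtain ⟨R₁, hR₁, hball₁⟩ := Metric.mem_nhds_iff.mp hsL
  obtain ⟨R₂, hR₂, hbdd⟩ := Metric.continuousAt_iff.mp hw.continuousAt.norm 1 zero_lt_one
  have hbdd' : ∀ z ∈ ball (e x₀) R₂, ‖w z‖ ≤ 1 + ‖w (e x₀)‖ := fun z hz =>
    sub_le_iff_le_add.mp <| le_of_lt <| lt_of_abs_lt <| Real.dist_eq _ _ ▸ hbdd hz
  have hint : interior e.target ∈ 𝓝 (e x₀) :=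
    isOpen_interior.mem_nhds (ModelWithCorners.isInteriorPoint_iff.mp hx)
  obtain ⟨R₀, hR₀, hball₀⟩ := Metric.mem_nhds_iff.mp hint
  set R : ℝ := min R₀ (min R₁ R₂) with hR_def
  have hR : 0 < R := lt_min hR₀ (lt_min hR₁ hR₂)
  set C : ℝ := 1 + ‖w (e x₀)‖ with hC_def
  have hC : 0 < C := add_pos_of_pos_of_nonneg zero_lt_one (norm_nonneg _)
  set ρ : ℝ := R / 4 with hρ_def
  have hρ : 0 < ρ := by positivity
  set ε : ℝ := ρ / C with hε_def
  have hε : 0 < ε := by positivity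
  refine ⟨ε, hε, e.source ∩ e ⁻¹' ball (e x₀) (R/2), Filter.inter_mem
    (extChartAt_source_mem_nhds x₀)
    ((continuousAt_extChartAt x₀).preimage_mem_nhds (ball_mem_nhds _ (by positivity))), ?_⟩
  rintro y ⟨hy1, hy2⟩
  set z₀ := e y with hz₀
  have hsub : closedBall z₀ ρ ⊆ ball (e x₀) R := fun z hz => by
    rw [mem_closedBall] at hz
    rw [mem_ball]
    calc dist z (e x₀) ≤ dist z z₀ + dist z₀ (e x₀) := dist_triangle _ _ _
      _ < ρ + R/2 := by
          have := mem_ball.mp hy2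
          exact add_lt_add_of_le_of_lt hz this
      _ ≤ R := by rw [hρ_def]; linarith
  set ρ' : ℝ≥0 := ⟨ρ, hρ.le⟩ with hρ'_def
  set C' : ℝ≥0 := ⟨C, hC.le⟩ with hC'_def
  have hpl : IsPicardLindelof (fun _ => w) (tmin := -ε) (tmax := ε)
      ⟨0, by constructor <;> linarith⟩ z₀ ρ' 0 C' L :=
    { lipschitzOnWith := fun t _ => hlip.mono <| hsub.trans <| fun z hz =>
        hball₁ (mem_ball.mpr (lt_of_lt_of_le (mem_ball.mp hz) ((min_le_right _ _).trans
          (min_le_left _ _))))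
      continuousOn := fun _ _ => continuousOn_const
      norm_le := fun t _ z hz => hbdd' z <| mem_ball.mpr (lt_of_lt_of_le
        (mem_ball.mp (hsub hz)) ((min_le_right _ _).trans (min_le_right _ _)))
      mul_max_le := by
        show C * max (ε - 0) (0 - -ε) ≤ ρ - ((0 : ℝ≥0) : ℝ)
        simp only [NNReal.coe_zero, sub_zero, zero_sub, neg_neg, max_self]
        rw [hε_def, mul_div_left_comm, div_self hC.ne', mul_one] }
  obtain ⟨sol, hsol0, hmem, hderiv⟩ := my_pl_sol z₀ hpl
  refine ⟨e.symm ∘ sol, by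
    simp only [Function.comp_apply, show sol 0 = z₀ from hsol0]
    exact e.left_inv hy1, ?_⟩
  apply my_transfer x₀
  intro t ht
  refine ⟨(hderiv t (Ioo_subset_Icc_self ht)).hasDerivAt (Icc_mem_nhds ht.1 ht.2), ?_⟩
  exact hball₀ <| mem_ball.mpr <| lt_of_lt_of_le (mem_ball.mp (hsub (hmem t
    (Ioo_subset_Icc_self ht)))) (min_le_left _ _)

section Alpha
set_option linter.unusedSectionVars false

variable {E : Type*} [NormedAddCommGroup E] [NormedSpace ℝ E]
  {H : Type*} [TopologicalSpace H] {I : ModelWithCorners ℝ E H}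
  {M : Type*} [TopologicalSpace M] [ChartedSpace H M] [IsManifold I 1 M]

/-- The set of `a ∈ (0, 1]` such that an integral curve through `x` exists on `Ioo (-a) a`. -/
def myS (v : (x : M) → TangentSpace I x) (x : M) : Set ℝ :=
  {a : ℝ | 0 < a ∧ a ≤ 1 ∧ ∃ γ : ℝ → M, γ 0 = x ∧ IsMIntegralCurveOn γ v (Set.Ioo (-a) a)}

/-- Truncated escape time. -/
noncomputable def myA (v : (x : M) → TangentSpace I x) (x : M) : ℝ := sSup (myS v x)

lemma myS_bddAbove (v : (x : M) → TangentSpace I x) (x : M) : BddAbove (myS v x) :=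
  ⟨1, fun _ ha => ha.2.1⟩

variable [CompleteSpace E] [BoundarylessManifold I M]
  {v : (x : M) → TangentSpace I x}

lemma myS_nonempty (hv : ContMDiff I I.tangent 1 (fun x => (⟨x, v x⟩ : TangentBundle I M)))
    (x : M) : (myS v x).Nonempty := by
  obtain ⟨ε, hε, U, hU, h⟩ := my_ule hv x
  obtain ⟨γ, hγ0, hγ⟩ := h x (mem_of_mem_nhds hU)
  refine ⟨min ε 1, ⟨lt_min hε one_pos, min_le_right _ _, γ, hγ0, hγ.mono ?_⟩⟩
  exact Set.Ioo_subset_Ioo (neg_le_neg (min_le_left _ _)) (min_le_left _ _)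

lemma myA_pos (hv : ContMDiff I I.tangent 1 (fun x => (⟨x, v x⟩ : TangentBundle I M)))
    (x : M) : 0 < myA v x := by
  obtain ⟨a, ha⟩ := myS_nonempty hv x
  exact lt_of_lt_of_le ha.1 (le_csSup (myS_bddAbove v x) ha)

lemma myA_le_one (hv : ContMDiff I I.tangent 1 (fun x => (⟨x, v x⟩ : TangentBundle I M)))
    (x : M) : myA v x ≤ 1 :=
  csSup_le (myS_nonempty hv x) fun _ ha => ha.2.1

lemma le_myA_of_mem {a : ℝ} {x : M} (ha : a ∈ myS v x) : a ≤ myA v x :=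
  le_csSup (myS_bddAbove v x) ha

variable [T2Space M]

/-- Along an integral curve, the escape time cannot decay too fast:
`min 1 (myA v (γ u) - |u|) ≤ myA v x`. -/
lemma myA_along (hv : ContMDiff I I.tangent 1 (fun x => (⟨x, v x⟩ : TangentBundle I M)))
    {x : M} {a : ℝ} {γ : ℝ → M} (ha0 : 0 < a)
    (hγ0 : γ 0 = x) (hγ : IsMIntegralCurveOn γ v (Set.Ioo (-a) a))
    {u : ℝ} (hu : |u| < a) : min 1 (myA v (γ u) - |u|) ≤ myA v x := by
  have habs := abs_lt.mp hu
  by_contra hcon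
  push_neg at hcon
  -- pick `b` with `myA v x < b < min 1 (myA v (γ u) - |u|)`
  obtain ⟨b, hb1, hb2⟩ := exists_between hcon
  have hb0 : 0 < b := lt_of_le_of_lt (myA_pos hv x).le hb1
  have hble : b ≤ 1 := le_of_lt (lt_of_lt_of_le hb2 (min_le_left _ _))
  have hbu : b + |u| < myA v (γ u) := by
    have := lt_of_lt_of_le hb2 (min_le_right _ _); linarith
  -- pick `a' ∈ myS v (γ u)` with `b + |u| < a'`
  obtain ⟨a', ha'S, ha'⟩ := exists_lt_of_lt_csSup (myS_nonempty hv (γ u)) hbu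
  obtain ⟨ha'0, ha'1, δ, hδ0, hδ⟩ := ha'S
  -- the shifted curve `γ ∘ (· + u)` is an integral curve through `γ u`
  have hshift : IsMIntegralCurveOn (γ ∘ (· + u)) v (Set.Ioo (-a - u) (a - u)) := by
    refine (hγ.comp_add u).mono fun t ht => ?_
    rw [Set.mem_setOf_eq]
    simp only [vadd_eq_add, neg_neg, Set.mem_Ioo] at *
    constructor <;> linarith [ht.1, ht.2]
  -- `δ` and the shifted curve agree on the common interval
  have hu' : |u| < a' := lt_of_le_of_lt (le_add_of_nonneg_left hb0.le) ha'
  have h0mem : (0:ℝ) ∈ Set.Ioo (max (-a') (-a - u)) (min a' (a - u)) := by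
    simp only [Set.mem_Ioo, max_lt_iff, lt_min_iff]
    refine ⟨⟨by linarith, by linarith⟩, by linarith, by linarith⟩
  have heq : Set.EqOn δ (γ ∘ (· + u)) (Set.Ioo (max (-a') (-a - u)) (min a' (a - u))) := by
    apply isMIntegralCurveOn_Ioo_eqOn_of_contMDiff_boundaryless h0mem hv
      (hδ.mono (Set.Ioo_subset_Ioo (le_max_left _ _) (min_le_left _ _)))
      (hshift.mono (Set.Ioo_subset_Ioo (le_max_right _ _) (min_le_right _ _)))
    simp only [Function.comp_apply, zero_add, hδ0]
  have humem : -u ∈ Set.Ioo (max (-a') (-a - u)) (min a' (a - u)) := by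
    simp only [Set.mem_Ioo, max_lt_iff, lt_min_iff]
    have := abs_lt.mp hu'
    refine ⟨⟨by linarith, by linarith⟩, by linarith, by linarith⟩
  have hδu : δ (-u) = x := by
    have := heq humem
    simpa only [Function.comp_apply, neg_add_cancel, hγ0] using this
  -- hence `b ∈ myS v x`
  have hmem : b ∈ myS v x := by
    refine ⟨hb0, hble, δ ∘ (· + (-u)), by simpa using hδu, ?_⟩
    refine (hδ.comp_add (-u)).mono fun t ht => ?_
    rw [Set.mem_setOf_eq]
    simp only [vadd_eq_add, neg_neg, Set.mem_Ioo] at ht ⊢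
    have h1 : |(-u) + t| < a' := by
      calc |(-u) + t| ≤ |(-u)| + |t| := abs_add_le _ _
        _ < |u| + b := by rw [abs_neg]; exact add_lt_add_right (abs_lt.mpr ht) _
        _ ≤ a' := by linarith
    have := abs_lt.mp h1
    exact ⟨by linarith, by linarith⟩
  exact absurd (le_myA_of_mem hmem) (not_le.mpr hb1)


lemma myA_le_two_mul (hv : ContMDiff I I.tangent 1 (fun x => (⟨x, v x⟩ : TangentBundle I M)))
    {x : M} {a : ℝ} {γ : ℝ → M} (ha0 : 0 < a) (haα : a ≤ myA v x)
    (hγ0 : γ 0 = x) (hγ : IsMIntegralCurveOn γ v (Set.Ioo (-a) a))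
    {u : ℝ} (hu : |u| < a) : myA v (γ u) ≤ 2 * myA v x := by
  have h := myA_along hv ha0 hγ0 hγ hu
  rcases le_or_gt (myA v (γ u) - |u|) 1 with hc | hc
  · rw [min_eq_right hc] at h
    have : |u| < myA v x := lt_of_lt_of_le hu haα
    linarith
  · rw [min_eq_left hc.le] at h
    have h1 : myA v (γ u) ≤ 1 := myA_le_one hv _
    linarith

/-- The key reparametrization step: if `f` is positive, continuous, and everywhere at most a
quarter of the escape time, then through every point there is an integral curve of `f • v`
defined on `Ioo (-1) 1`. -/
lemma my_repar (hv : ContMDiff I I.tangent 1 (fun x => (⟨x, v x⟩ : TangentBundle I M)))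
    {f : M → ℝ} (hf : Continuous f) (hfpos : ∀ z, 0 < f z)
    (hfle : ∀ z, f z ≤ myA v z / 4) (y : M) :
    ∃ σ : ℝ → M, σ 0 = y ∧
      IsMIntegralCurveOn σ (fun z => f z • v z) (Set.Ioo (-1) 1) := by
  set α := myA v y with hα_def
  have hα : 0 < α := myA_pos hv y
  obtain ⟨a, haS, ha34⟩ := exists_lt_of_lt_csSup (myS_nonempty hv y)
    (show 3/4 * α < myA v y by linarith)
  obtain ⟨ha0, ha1, γ, hγ0, hγ⟩ := haS
  have haα : a ≤ α := le_myA_of_mem ⟨ha0, ha1, γ, hγ0, hγ⟩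
  set c' : ℝ := 3/5 * α with hc'_def
  have hc'0 : 0 < c' := by positivity
  have hc'a : c' < a := by rw [hc'_def]; linarith
  set clamp : ℝ → ℝ := fun u => max (-c') (min c' u) with hclamp_def
  have hclamp_cont : Continuous clamp := continuous_const.max (continuous_const.min continuous_id)
  have hclamp_mem : ∀ u, clamp u ∈ Set.Ioo (-a) a := fun u => by
    constructor
    · exact lt_of_lt_of_le (neg_lt_neg hc'a) (le_max_left _ _)
    · exact lt_of_le_of_lt (max_le (by linarith) (min_le_left _ _)) hc'a
  have hclamp_eq : ∀ u, |u| ≤ c' → clamp u = u := fun u hu => by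
    have := abs_le.mp hu
    rw [hclamp_def]
    simp only []
    rw [min_eq_right this.2, max_eq_right this.1]
  -- the speed function
  set g : ℝ → ℝ := fun u => f (γ (clamp u)) with hg_def
  have hg_cont : Continuous g :=
    hf.comp (hγ.continuousOn.comp_continuous hclamp_cont hclamp_mem)
  have hg_pos : ∀ u, 0 < g u := fun u => hfpos _
  have hg_le : ∀ u, g u ≤ α / 2 := fun u => by
    have h2 := myA_le_two_mul hv ha0 haα hγ0 hγ (u := clamp u)
      (abs_lt.mpr (hclamp_mem u))
    have := hfle (γ (clamp u))
    rw [hg_def]; simp only []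
    rw [hα_def]
    linarith
  have hginv_cont : Continuous fun u => (g u)⁻¹ := hg_cont.inv₀ fun u => (hg_pos u).ne'
  -- the time rescaling function
  set G : ℝ → ℝ := fun s => ∫ u in (0:ℝ)..s, (g u)⁻¹ with hG_def
  have hG' : ∀ s, HasDerivAt G (g s)⁻¹ s := fun s =>
    intervalIntegral.integral_hasDerivAt_right (hginv_cont.intervalIntegrable _ _)
      (hginv_cont.stronglyMeasurableAtFilter _ _) hginv_cont.continuousAt
  have hG_cont : Continuous G := continuous_iff_continuousAt.mpr fun s => (hG' s).continuousAt
  have hG_mono : StrictMono G := strictMono_of_deriv_pos fun s => by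
    rw [(hG' s).deriv]; exact inv_pos.mpr (hg_pos s)
  -- linear lower bounds on `G`
  have hkey : ∀ u, 2 / α ≤ (g u)⁻¹ := fun u => by
    have h1 : (α / 2)⁻¹ ≤ (g u)⁻¹ := by
      apply inv_anti₀ (hg_pos u) (hg_le u)
    rwa [inv_div] at h1
  have hG_ge : ∀ s, 0 ≤ s → 2 / α * s ≤ G s := fun s hs => by
    have h1 : ∫ _ in (0:ℝ)..s, 2 / α ≤ ∫ u in (0:ℝ)..s, (g u)⁻¹ :=
      intervalIntegral.integral_mono_on hs intervalIntegrable_const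
        (hginv_cont.intervalIntegrable _ _) (fun u _ => hkey u)
    rw [intervalIntegral.integral_const, smul_eq_mul, sub_zero, mul_comm] at h1
    exact h1
  have hG_le : ∀ s, s ≤ 0 → G s ≤ 2 / α * s := fun s hs => by
    have h1 : ∫ _ in s..(0:ℝ), 2 / α ≤ ∫ u in s..(0:ℝ), (g u)⁻¹ :=
      intervalIntegral.integral_mono_on hs intervalIntegrable_const
        (hginv_cont.intervalIntegrable _ _) (fun u _ => hkey u)
    rw [intervalIntegral.integral_const, smul_eq_mul, zero_sub, neg_mul, mul_comm] at h1
    have h2 : G s = -∫ u in s..(0:ℝ), (g u)⁻¹ := by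
      rw [hG_def]
      simp only []
      rw [← intervalIntegral.integral_symm]
    rw [h2]
    linarith
  -- `G` is surjective
  have hG_surj : Function.Surjective G := by
    apply hG_cont.surjective
    · apply Filter.tendsto_atTop_mono' _ _
        (Filter.Tendsto.const_mul_atTop (by positivity : (0:ℝ) < 2 / α) Filter.tendsto_id)
      filter_upwards [Filter.eventually_ge_atTop (0:ℝ)] with s hs
      exact hG_ge s hs
    · apply Filter.tendsto_atBot_mono' _ _
        (Filter.Tendsto.const_mul_atBot (by positivity : (0:ℝ) < 2 / α) Filter.tendsto_id)
      filter_upwards [Filter.eventually_le_atBot (0:ℝ)] with s hs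
      exact hG_le s hs
  -- the inverse `τ` of `G`
  set Giso := StrictMono.orderIsoOfSurjective G hG_mono hG_surj with hGiso_def
  set τ : ℝ → ℝ := fun t => Giso.symm t with hτ_def
  have hτ_cont : Continuous τ := (Giso.toHomeomorph.symm).continuous
  have hGτ : ∀ t, G (τ t) = t := fun t => by
    have := Giso.apply_symm_apply t
    rwa [hGiso_def, show ⇑(StrictMono.orderIsoOfSurjective G hG_mono hG_surj) = G from rfl]
      at this
  have hτG : ∀ s, τ (G s) = s := fun s =>
    StrictMono.orderIsoOfSurjective_symm_apply_self G hG_mono hG_surj s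
  have hG0 : G 0 = 0 := intervalIntegral.integral_same
  have hτ0 : τ 0 = 0 := by have := hτG 0; rwa [hG0] at this
  -- derivative of `τ`
  have hτ' : ∀ t, HasDerivAt τ (g (τ t)) t := fun t => by
    have h := HasDerivAt.of_local_left_inverse hτ_cont.continuousAt (hG' (τ t))
      (ne_of_gt (inv_pos.mpr (hg_pos _))) (Filter.Eventually.of_forall hGτ)
    rwa [inv_inv] at h
  -- bound on `τ` for `|t| < 1`
  have hτ_mono : StrictMono τ := fun s t hst => Giso.symm.strictMono hst
  have hτ_bound : ∀ t, |t| < 1 → |τ t| < α / 2 := fun t ht => by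
    have habs := abs_lt.mp ht
    have h1 : G (-(α/2)) ≤ -1 := by
      have := hG_le (-(α/2)) (by linarith)
      have h2 : 2 / α * -(α/2) = -1 := by field_simp <;> ring
      linarith
    have h2 : 1 ≤ G (α/2) := by
      have := hG_ge (α/2) (by linarith)
      have h3 : 2 / α * (α/2) = 1 := by field_simp <;> ring
      linarith
    rw [abs_lt]
    constructor
    · have := hτ_mono (show G (-(α/2)) < t by linarith)
      rwa [hτG] at this
    · have := hτ_mono (show t < G (α/2) by linarith)
      rwa [hτG] at this
  -- the desired curve
  refine ⟨fun t => γ (τ t), by simp only [hτ0, hγ0], ?_⟩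
  intro t ht
  rw [Set.mem_Ioo] at ht
  have ht1 : |t| < 1 := abs_lt.mpr ht
  have hbound := hτ_bound t ht1
  have hmemc' : |τ t| ≤ c' := by
    rw [hc'_def]
    have : α / 2 ≤ 3/5 * α := by linarith
    linarith [hbound]
  have hmema : τ t ∈ Set.Ioo (-a) a := by
    have := abs_lt.mp hbound
    constructor <;> [linarith [hc'a, abs_le.mp hmemc']; linarith [hc'a, (abs_le.mp hmemc').2]]
  -- derivative of `γ` at `τ t`
  have hΓ := (hγ (τ t) hmema).hasMFDerivAt (Ioo_mem_nhds hmema.1 hmema.2)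
  -- derivative of `τ` as a manifold derivative
  have hτmf : HasMFDerivAt 𝓘(ℝ, ℝ) 𝓘(ℝ, ℝ) τ t
      (ContinuousLinearMap.smulRight (1 : ℝ →L[ℝ] ℝ) (g (τ t))) :=
    ((hτ' t).hasFDerivAt).hasMFDerivAt
  have hcomp := hΓ.comp t hτmf
  have hgf : g (τ t) = f (γ (τ t)) := by
    rw [hg_def]
    simp only []
    rw [hclamp_eq _ hmemc']
  have hclm : (ContinuousLinearMap.smulRight (1 : ℝ →L[ℝ] ℝ) (v (γ (τ t)))).comp
      (ContinuousLinearMap.smulRight (1 : ℝ →L[ℝ] ℝ) (g (τ t)))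
      = ContinuousLinearMap.smulRight (1 : ℝ →L[ℝ] ℝ) (f (γ (τ t)) • v (γ (τ t))) := by
    ext
    simp only [ContinuousLinearMap.coe_comp', Function.comp_apply,
      ContinuousLinearMap.smulRight_apply, ContinuousLinearMap.one_apply, one_smul,
      smul_eq_mul, mul_one, one_mul, hgf]
  exact (hcomp.congr_mfderiv hclm).hasMFDerivWithinAt

end Alpha

lemma my_smul_section
    {E : Type*} [NormedAddCommGroup E] [NormedSpace ℝ E]
    {H : Type*} [TopologicalSpace H] {I : ModelWithCorners ℝ E H}
    {M : Type*} [TopologicalSpace M] [ChartedSpace H M] [IsManifold I 1 M]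
    {v : (x : M) → TangentSpace I x} {f : M → ℝ}
    (hf : ContMDiff I 𝓘(ℝ, ℝ) 1 f)
    (hs : ContMDiff I I.tangent 1 (fun x => (⟨x, v x⟩ : TangentBundle I M))) :
    ContMDiff I I.tangent 1 (fun x => (⟨x, f x • v x⟩ : TangentBundle I M)) := by
  intro x₀
  have hs' := hs x₀
  rw [Bundle.contMDiffAt_section] at hs' ⊢
  set e := trivializationAt E (TangentSpace I) x₀ with he
  refine ((hf x₀).smul hs').congr_of_eventuallyEq ?_
  refine Filter.eventually_of_mem (e.open_baseSet.mem_nhds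
    (FiberBundle.mem_baseSet_trivializationAt E (TangentSpace I) x₀)) ?_
  intro x hx
  apply (e.linear ℝ hx).2

theorem exists_smooth_pos_rescale_complete'
    {E : Type*} [NormedAddCommGroup E] [NormedSpace ℝ E] [FiniteDimensional ℝ E]
    {H : Type*} [TopologicalSpace H] (I : ModelWithCorners ℝ E H) [I.Boundaryless]
    {M : Type*} [TopologicalSpace M] [ChartedSpace H M] [IsManifold I (⊤ : ℕ∞) M]
    [T2Space M] [SecondCountableTopology M]
    (V : (x : M) → TangentSpace I x)
    (hV : ContMDiff I I.tangent (⊤ : ℕ∞) (fun x => (⟨x, V x⟩ : TangentBundle I M)))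
    (hV0 : ∀ x : M, V x ≠ 0) :
    ∃ f : M → ℝ, ContMDiff I 𝓘(ℝ, ℝ) (⊤ : ℕ∞) f ∧ (∀ p : M, 0 < f p) ∧
      ∀ p : M, ∃ γ : ℝ → M, γ 0 = p ∧ IsMIntegralCurve γ (fun x => f x • V x) := by
  haveI : CompleteSpace E := FiniteDimensional.complete ℝ E
  haveI : IsManifold I 1 M := IsManifold.of_le (n := ((⊤ : ℕ∞) : WithTop ℕ∞)) (by exact_mod_cast le_top)
  haveI : LocallyCompactSpace M := Manifold.locallyCompact_of_finiteDimensional I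
  have hv1 : ContMDiff I I.tangent 1 (fun x => (⟨x, V x⟩ : TangentBundle I M)) :=
    hV.of_le (by exact_mod_cast le_top)
  obtain ⟨g, hg⟩ := exists_contMDiffMap_forall_mem_convex_of_local (I := I) (F := ℝ) (n := (⊤ : ℕ∞))
    (t := fun x => Set.Ioo 0 (myA V x / 4)) (fun x => convex_Ioo _ _) (fun x => by
      obtain ⟨ε, hε, U, hU, h⟩ := my_ule hv1 x
      refine ⟨U, hU, fun _ => min ε 1 / 8, contMDiffOn_const, fun y hy => ?_⟩
      obtain ⟨γ, hγ0, hγ⟩ := h y hy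
      have hmem : min ε 1 ∈ myS V y := ⟨lt_min hε one_pos, min_le_right _ _, γ, hγ0,
        hγ.mono (Set.Ioo_subset_Ioo (neg_le_neg (min_le_left _ _)) (min_le_left _ _))⟩
      have hle := le_myA_of_mem hmem
      have hm : 0 < min ε 1 := lt_min hε one_pos
      exact ⟨by positivity, by linarith⟩)
  have hfc : ContMDiff I 𝓘(ℝ, ℝ) (⊤ : ℕ∞) ⇑g := g.contMDiff
  have hfv : ContMDiff I I.tangent 1 (fun x => (⟨x, g x • V x⟩ : TangentBundle I M)) :=
    my_smul_section (hfc.of_le (by exact_mod_cast le_top)) hv1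
  refine ⟨⇑g, hfc, fun p => (hg p).1, fun p => ?_⟩
  exact exists_isMIntegralCurve_of_isMIntegralCurveOn hfv one_pos
    (fun x => my_repar hv1 hfc.continuous (fun z => (hg z).1) (fun z => (hg z).2.le) x) p

end Aux

/-- Any smooth nowhere-vanishing vector field on a smooth manifold (finite-dimensional,
Hausdorff, second countable, boundaryless) can be rescaled by a smooth everywhere-positive
function to a complete vector field: through every point there is an integral curve of the
rescaled field defined on all of `ℝ`. -/
theorem exists_smooth_pos_rescale_complete
    {E : Type*} [NormedAddCommGroup E] [NormedSpace ℝ E] [FiniteDimensional ℝ E]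
    {H : Type*} [TopologicalSpace H] (I : ModelWithCorners ℝ E H) [I.Boundaryless]
    {M : Type*} [TopologicalSpace M] [ChartedSpace H M] [IsManifold I (⊤ : ℕ∞) M]
    [T2Space M] [SecondCountableTopology M]
    (V : (x : M) → TangentSpace I x)
    (hV : ContMDiff I I.tangent (⊤ : ℕ∞) (fun x => (⟨x, V x⟩ : TangentBundle I M)))
    (hV0 : ∀ x : M, V x ≠ 0) :
    ∃ f : M → ℝ, ContMDiff I 𝓘(ℝ, ℝ) (⊤ : ℕ∞) f ∧ (∀ p : M, 0 < f p) ∧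
      ∀ p : M, ∃ γ : ℝ → M, γ 0 = p ∧ IsMIntegralCurve γ (fun x => f x • V x) := by
  exact exists_smooth_pos_rescale_complete' I V hV hV0
end

section
/- Let M be a topological space and let θ : ℝ × M → M be a continuous action of the additive group ℝ on M such that the relation R = {(p, q) ∈ M × M : there exists τ ≥ 0 with q = θ(τ, p)} is a closed subset of M × M. Fix p ∈ M and suppose the orbit map θ⁽ᵖ⁾ : ℝ → M, τ ↦ θ(τ, p), is injective. Then θ⁽ᵖ⁾ is a closed map: the image under θ⁽ᵖ⁾ of every closed subset of ℝ is closed in M. -/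
/-- For a continuous `ℝ`-action on `M` whose relation
`{(p, q) : ∃ τ ≥ 0, q = θ (τ, p)}` is closed in `M × M`, any injective orbit map
`τ ↦ θ (τ, p)` is a closed map. -/
theorem closedRel_orbitMap_isClosedMap {M : Type*} [TopologicalSpace M]
    (θ : ℝ × M → M) (hcont : Continuous θ)
    (h0 : ∀ p : M, θ (0, p) = p)
    (hadd : ∀ (τ τ' : ℝ) (p : M), θ (τ + τ', p) = θ (τ, θ (τ', p)))
    (hclosed : IsClosed {pq : M × M | ∃ τ : ℝ, 0 ≤ τ ∧ pq.2 = θ (τ, pq.1)})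
    (p : M) (hinj : Function.Injective fun τ : ℝ => θ (τ, p)) :
    ∀ A : Set ℝ, IsClosed A → IsClosed ((fun τ : ℝ => θ (τ, p)) '' A) := by
  intro A hA
  set f : ℝ → M := fun τ => θ (τ, p) with hf
  set R : Set (M × M) := {pq : M × M | ∃ τ : ℝ, 0 ≤ τ ∧ pq.2 = θ (τ, pq.1)} with hR
  have hIic : ∀ a : ℝ, IsClosed (f '' Set.Iic a) := by
    intro a
    have heq : f '' Set.Iic a = (fun q => (q, f a)) ⁻¹' R := by
      ext q
      constructor
      · rintro ⟨σ, hσ, rfl⟩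
        refine ⟨a - σ, by simp at hσ; linarith, ?_⟩
        show θ (a, p) = θ (a - σ, θ (σ, p))
        rw [← hadd]; ring_nf
      · rintro ⟨τ, hτ, hq⟩
        refine ⟨a - τ, by simp; linarith, ?_⟩
        show θ (a - τ, p) = q
        simp only at hq
        have h1 : θ (-τ, θ (a, p)) = q := by
          rw [show θ (a, p) = f a from rfl, hq, ← hadd]
          simp [h0]
        rw [← h1, ← hadd]; ring_nf
    rw [heq]
    exact hclosed.preimage (by fun_prop)
  have hIci : ∀ b : ℝ, IsClosed (f '' Set.Ici b) := by
    intro b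
    have heq : f '' Set.Ici b = (fun q => (f b, q)) ⁻¹' R := by
      ext q
      constructor
      · rintro ⟨σ, hσ, rfl⟩
        refine ⟨σ - b, by simp at hσ; linarith, ?_⟩
        show θ (σ, p) = θ (σ - b, θ (b, p))
        rw [← hadd]; ring_nf
      · rintro ⟨τ, hτ, hq⟩
        simp only at hq
        refine ⟨τ + b, by simp; linarith, ?_⟩
        show θ (τ + b, p) = q
        rw [hadd]; exact hq.symm
    rw [heq]
    exact hclosed.preimage (by fun_prop)
  -- index of "good" pairs
  set I := {ab : ℝ × ℝ // A ⊆ Set.Iic ab.1 ∪ Set.Ici ab.2} with hI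
  haveI : Nonempty I := ⟨⟨(0, 0), fun x _ => by
    rcases le_total x 0 with h | h
    · exact Or.inl h
    · exact Or.inr h⟩⟩
  have hA_eq : A = ⋂ s : I, (Set.Iic s.1.1 ∪ Set.Ici s.1.2) := by
    apply Set.Subset.antisymm
    · intro x hx
      exact Set.mem_iInter.2 fun s => s.2 hx
    · intro x hx
      by_contra hxA
      obtain ⟨ε, hε, hball⟩ := Metric.isOpen_iff.1 hA.isOpen_compl x hxA
      have hsub : A ⊆ Set.Iic (x - ε) ∪ Set.Ici (x + ε) := by
        intro y hy
        by_contra hy'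
        simp only [Set.mem_union, Set.mem_Iic, Set.mem_Ici, not_or, not_le] at hy'
        have : y ∈ Metric.ball x ε := by
          rw [Real.ball_eq_Ioo]
          exact ⟨by linarith [hy'.1], by linarith [hy'.2]⟩
        exact hball this hy
      have := Set.mem_iInter.1 hx ⟨(x - ε, x + ε), hsub⟩
      simp only [Set.mem_union, Set.mem_Iic, Set.mem_Ici] at this
      rcases this with h | h <;> linarith
  rw [hA_eq, (hinj.injOn).image_iInter_eq]
  exact isClosed_iInter fun s => by
    rw [Set.image_union]; exact (hIic _).union (hIci _)
end
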